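/- arXiv:1907.01401 — 5 statements merged into one kernel-verified Lean document; each statement's English description precedes it below -/
import Mathlib

section
/- Let D ≥ 2 and i ∈ [1,D]. With T_i : V' → V as above and V_i = image(T_i), the orthogonal complement of e_i in V (with respect to the form (e_a,e_b) = 1 iff |a−b| = 1) equals V_i ⊕ 𝔽₂·e_i. -/
/-- The bilinear form on `𝔽₂^n` determined by `(e_i, e_j) = 1` iff `|i - j| = 1`. -/
def bform (n : ℕ) (x y : Fin n → ZMod 2) : ZMod 2 :=
  ∑ a : Fin n, ∑ b : Fin n,
    if a.1 = b.1 + 1 ∨ b.1 = a.1 + 1 then x a * y b else 0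

/-- The basis vector `e_i` of `𝔽₂^n` (1-based index `i`). -/
def basisVec (n i : ℕ) : Fin n → ZMod 2 := fun k => if k.1 + 1 = i then 1 else 0

/-- Coefficient of `e_k` in `T_i(e'_j)` (all indices 1-based). -/
def tcoef (i j k : ℕ) : ZMod 2 :=
  if j + 2 ≤ i then (if k = j then 1 else 0)
  else if j + 1 = i then (if k = i - 1 ∨ k = i ∨ k = i + 1 then 1 else 0)
  else (if k = j + 2 then 1 else 0)

/-- The linear map `T_i : 𝔽₂^{D-2} → 𝔽₂^D`. -/
def Tmap (D i : ℕ) (x : Fin (D - 2) → ZMod 2) : Fin D → ZMod 2 :=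
  fun k => ∑ j : Fin (D - 2), x j * tcoef i (j.1 + 1) (k.1 + 1)

lemma Tmap_apply (D i : ℕ) (hi : 1 ≤ i) (hiD : i ≤ D) (x : Fin (D-2) → ZMod 2) (k : Fin D) :
    Tmap D i x k =
      if h : k.1 + 3 ≤ i then x ⟨k.1, by omega⟩
      else if h' : i + 1 ≤ k.1 then x ⟨k.1 - 2, by have := k.2; omega⟩
      else if h'' : 2 ≤ i ∧ i < D then x ⟨i - 2, by omega⟩
      else 0 := by
  have hk := k.2
  unfold Tmap
  split_ifs with h h' h''
  · rw [Finset.sum_eq_single (⟨k.1, by omega⟩ : Fin (D-2))]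
    · have : tcoef i (k.1 + 1) (k.1 + 1) = 1 := by
        unfold tcoef; split_ifs <;> first | rfl | (exfalso; omega)
      rw [this, mul_one]
    · intro j _ hj
      have hjk : j.1 ≠ k.1 := fun hh => hj (Fin.ext hh)
      have : tcoef i (j.1 + 1) (k.1 + 1) = 0 := by
        unfold tcoef; split_ifs <;> first | rfl | (exfalso; omega)
      rw [this, mul_zero]
    · intro hmem; exact absurd (Finset.mem_univ _) hmem
  · rw [Finset.sum_eq_single (⟨k.1 - 2, by omega⟩ : Fin (D-2))]
    · have : tcoef i (k.1 - 2 + 1) (k.1 + 1) = 1 := by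
        unfold tcoef; split_ifs <;> first | rfl | (exfalso; omega)
      rw [this, mul_one]
    · intro j _ hj
      have hjk : j.1 ≠ k.1 - 2 := fun hh => hj (Fin.ext hh)
      have hj2 := j.2
      have : tcoef i (j.1 + 1) (k.1 + 1) = 0 := by
        unfold tcoef; split_ifs <;> first | rfl | (exfalso; omega)
      rw [this, mul_zero]
    · intro hmem; exact absurd (Finset.mem_univ _) hmem
  · rw [Finset.sum_eq_single (⟨i - 2, by omega⟩ : Fin (D-2))]
    · have : tcoef i (i - 2 + 1) (k.1 + 1) = 1 := by
        unfold tcoef; split_ifs <;> first | rfl | (exfalso; omega)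
      rw [this, mul_one]
    · intro j _ hj
      have hjk : j.1 ≠ i - 2 := fun hh => hj (Fin.ext hh)
      have hj2 := j.2
      have : tcoef i (j.1 + 1) (k.1 + 1) = 0 := by
        unfold tcoef; split_ifs <;> first | rfl | (exfalso; omega)
      rw [this, mul_zero]
    · intro hmem; exact absurd (Finset.mem_univ _) hmem
  · apply Finset.sum_eq_zero
    intro j _
    have hj2 := j.2
    have : tcoef i (j.1 + 1) (k.1 + 1) = 0 := by
      unfold tcoef; split_ifs <;> first | rfl | (exfalso; omega)
    rw [this, mul_zero]

lemma sum_coord (D m : ℕ) (y : Fin D → ZMod 2) :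
    (∑ a : Fin D, if a.1 = m then y a else 0) = if h : m < D then y ⟨m, h⟩ else 0 := by
  split_ifs with h
  · rw [Finset.sum_eq_single (⟨m, h⟩ : Fin D)]
    · rw [if_pos rfl]
    · intro a _ ha
      exact if_neg fun hh => ha (Fin.ext hh)
    · intro hmem; exact absurd (Finset.mem_univ _) hmem
  · apply Finset.sum_eq_zero
    intro a _
    have := a.2
    exact if_neg (by omega)

lemma bform_basis (D i : ℕ) (hi : 1 ≤ i) (hiD : i ≤ D) (y : Fin D → ZMod 2) :
    bform D y (basisVec D i) =
      (if h : i < D then y ⟨i, h⟩ else 0) + (if h : 2 ≤ i then y ⟨i - 2, by omega⟩ else 0) := by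
  unfold bform basisVec
  have step1 : ∀ a : Fin D,
      (∑ b : Fin D, if a.1 = b.1 + 1 ∨ b.1 = a.1 + 1 then y a * (if b.1 + 1 = i then 1 else 0) else 0)
        = (if a.1 = i then y a else 0) + (if a.1 + 2 = i then y a else 0) := by
    intro a
    rw [Finset.sum_eq_single (⟨i - 1, by omega⟩ : Fin D)]
    · simp only
      split_ifs <;> first | (exfalso; omega) | ring
    · intro b _ hb
      have hbne : b.1 ≠ i - 1 := fun hh => hb (Fin.ext hh)
      have hb2 := b.2
      split_ifs with h1 h2 <;> first | (exfalso; omega) | ring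
    · intro hmem; exact absurd (Finset.mem_univ _) hmem
  rw [Finset.sum_congr rfl (fun a _ => step1 a), Finset.sum_add_distrib]
  by_cases h2 : 2 ≤ i
  · have e2 : (∑ a : Fin D, if a.1 + 2 = i then y a else 0)
        = ∑ a : Fin D, if a.1 = i - 2 then y a else 0 :=
      Finset.sum_congr rfl (fun a _ => if_congr (by omega) rfl rfl)
    rw [e2, sum_coord, sum_coord, dif_pos (by omega : i - 2 < D), dif_pos h2]
  · have e2 : (∑ a : Fin D, if a.1 + 2 = i then y a else 0) = 0 :=
      Finset.sum_eq_zero (fun a _ => if_neg (by omega))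
    rw [e2, sum_coord, dif_neg h2]

/-- The orthogonal complement of `e_i` in `V` equals `V_i ⊕ 𝔽₂·e_i`, where
`V_i` is the image of `T_i`. -/
theorem stmt_6 (D i : ℕ) (hD : 2 ≤ D) (hi : 1 ≤ i) (hiD : i ≤ D) :
    (∀ y : Fin D → ZMod 2,
        bform D y (basisVec D i) = 0 ↔
          ∃ (x' : Fin (D - 2) → ZMod 2) (c : ZMod 2),
            y = Tmap D i x' + c • basisVec D i) ∧
      basisVec D i ∉ Set.range (Tmap D i) := by
  constructor
  · intro y
    rw [bform_basis D i hi hiD]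
    constructor
    · intro hy
      refine ⟨fun j => if h : j.1 + 2 ≤ i then y ⟨j.1, by omega⟩
          else y ⟨j.1 + 2, by have := j.2; omega⟩,
        y ⟨i - 1, by omega⟩ + (if h : 2 ≤ i ∧ i < D then y ⟨i - 2, by omega⟩ else 0), ?_⟩
      funext k
      have hk := k.2
      rw [Pi.add_apply, Pi.smul_apply, Tmap_apply D i hi hiD]
      unfold basisVec
      simp only [smul_eq_mul]
      by_cases hki : k.1 + 3 ≤ i
      · rw [dif_pos hki, dif_pos (by omega : k.1 + 2 ≤ i), if_neg (by omega), mul_zero, add_zero]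
      · rw [dif_neg hki]
        by_cases hki2 : i + 1 ≤ k.1
        · rw [dif_pos hki2, dif_neg (by omega : ¬ (k.1 - 2 + 2 ≤ i)), if_neg (by omega),
            mul_zero, add_zero]
          exact congrArg y (Fin.ext (show k.1 = k.1 - 2 + 2 by omega))
        · rw [dif_neg hki2]
          by_cases hmid : 2 ≤ i ∧ i < D
          · rw [dif_pos hmid, dif_pos hmid, dif_pos (show i - 2 + 2 ≤ i by omega)]
            by_cases hkey : k.1 + 1 = i
            · rw [if_pos hkey]
              have hkk : k = (⟨i - 1, by omega⟩ : Fin D) := Fin.ext (show k.1 = i - 1 by omega)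
              rw [hkk]
              exact (by decide : ∀ a b : ZMod 2, a = b + (a + b) * 1) _ _
            · rw [if_neg hkey, mul_zero, add_zero]
              by_cases hkey2 : k.1 + 2 = i
              · exact congrArg y (Fin.ext (show k.1 = i - 2 by omega))
              · -- k.1 = i
                have hkk : k = (⟨i, by omega⟩ : Fin D) := Fin.ext (show k.1 = i by omega)
                rw [dif_pos (show i < D by omega), dif_pos (show 2 ≤ i by omega)] at hy
                rw [hkk]
                exact (by decide : ∀ a b : ZMod 2, a + b = 0 → a = b) _ _ hy
          · rw [dif_neg hmid, dif_neg hmid, add_zero, zero_add]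
            by_cases hkey : k.1 + 1 = i
            · rw [if_pos hkey, mul_one]
              exact congrArg y (Fin.ext (show k.1 = i - 1 by omega))
            · rw [if_neg hkey, mul_zero]
              by_cases h1 : i = 1
              · have hkk : k = (⟨i, by omega⟩ : Fin D) := Fin.ext (show k.1 = i by omega)
                rw [dif_pos (show i < D by omega), dif_neg (show ¬ 2 ≤ i by omega),
                  add_zero] at hy
                rw [hkk]; exact hy
              · have hDi : i = D := by omega
                have hkk : k = (⟨i - 2, by omega⟩ : Fin D) := Fin.ext (show k.1 = i - 2 by omega)
                rw [dif_neg (show ¬ i < D by omega), dif_pos (show 2 ≤ i by omega),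
                  zero_add] at hy
                rw [hkk]; exact hy
    · rintro ⟨x, c, rfl⟩
      have hT : ∀ (k : Fin D), ¬ (k.1 + 3 ≤ i) → ¬ (i + 1 ≤ k.1) →
          Tmap D i x k = if h : 2 ≤ i ∧ i < D then x ⟨i - 2, by omega⟩ else 0 := by
        intro k h1 h2
        rw [Tmap_apply D i hi hiD, dif_neg h1, dif_neg h2]
      by_cases h2 : 2 ≤ i
      · rw [dif_pos h2]
        by_cases hD' : i < D
        · rw [dif_pos hD']
          rw [Pi.add_apply, Pi.add_apply, Pi.smul_apply, Pi.smul_apply,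
            hT ⟨i, hD'⟩ (show ¬ (i + 3 ≤ i) by omega) (show ¬ (i + 1 ≤ i) by omega),
            hT ⟨i - 2, by omega⟩ (show ¬ (i - 2 + 3 ≤ i) by omega)
              (show ¬ (i + 1 ≤ i - 2) by omega),
            dif_pos (⟨h2, hD'⟩ : 2 ≤ i ∧ i < D)]
          unfold basisVec
          rw [if_neg (show ¬ (i + 1 = i) by omega), if_neg (show ¬ (i - 2 + 1 = i) by omega)]
          exact (by decide : ∀ a c : ZMod 2, (a + c * (0:ZMod 2)) + (a + c * (0:ZMod 2)) = 0) _ _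
        · rw [dif_neg hD', Pi.add_apply, Pi.smul_apply,
            hT ⟨i - 2, by omega⟩ (show ¬ (i - 2 + 3 ≤ i) by omega)
              (show ¬ (i + 1 ≤ i - 2) by omega),
            dif_neg (show ¬ (2 ≤ i ∧ i < D) by omega)]
          unfold basisVec
          rw [if_neg (show ¬ (i - 2 + 1 = i) by omega)]
          exact (by decide : ∀ c : ZMod 2, (0 : ZMod 2) + ((0:ZMod 2) + c * (0:ZMod 2)) = 0) _
      · rw [dif_neg h2, dif_pos (show i < D by omega), Pi.add_apply, Pi.smul_apply,
          hT ⟨i, by omega⟩ (show ¬ (i + 3 ≤ i) by omega) (show ¬ (i + 1 ≤ i) by omega),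
          dif_neg (show ¬ (2 ≤ i ∧ i < D) by omega)]
        unfold basisVec
        rw [if_neg (show ¬ (i + 1 = i) by omega)]
        exact (by decide : ∀ c : ZMod 2, ((0:ZMod 2) + c * (0:ZMod 2)) + (0:ZMod 2) = 0) _
  · rintro ⟨x, hx⟩
    have h1 := congrFun hx ⟨i - 1, by omega⟩
    rw [Tmap_apply D i hi hiD, dif_neg (show ¬ (i - 1 + 3 ≤ i) by omega),
      dif_neg (show ¬ (i + 1 ≤ i - 1) by omega)] at h1
    unfold basisVec at h1
    rw [if_pos (show i - 1 + 1 = i by omega)] at h1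
    by_cases hmid : 2 ≤ i ∧ i < D
    · rw [dif_pos hmid] at h1
      have h2 := congrFun hx ⟨i - 2, by omega⟩
      rw [Tmap_apply D i hi hiD, dif_neg (show ¬ (i - 2 + 3 ≤ i) by omega),
        dif_neg (show ¬ (i + 1 ≤ i - 2) by omega), dif_pos hmid] at h2
      unfold basisVec at h2
      rw [if_neg (show ¬ (i - 2 + 1 = i) by omega)] at h2
      rw [h2] at h1
      exact (by decide : (0 : ZMod 2) ≠ 1) h1
    · rw [dif_neg hmid] at h1
      exact (by decide : (0 : ZMod 2) ≠ 1) h1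
end

section
/- Let B be a set of intervals in [1,D] satisfying (P₀) (any two members are equal, non-touching, or nested). Then the vectors {e_I : I ∈ B} are linearly independent over 𝔽₂, hence form a basis of the subspace ⟨B⟩ they span. -/
/-- An interval `[a,b] ⊆ [1,D]`, encoded as the pair `(a,b)`. -/
def IsInterval (D : ℕ) (p : ℕ × ℕ) : Prop := 1 ≤ p.1 ∧ p.1 ≤ p.2 ∧ p.2 ≤ D

/-- `p` and `q` are non-touching. -/
def NonTouch (p q : ℕ × ℕ) : Prop := q.2 + 2 ≤ p.1 ∨ p.2 + 2 ≤ q.1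

/-- `p ≺ q` : `p` is nested in `q`. -/
def Prec (p q : ℕ × ℕ) : Prop := q.1 < p.1 ∧ p.2 < q.2

/-- Property (P₀): any two members of `B` are equal, non-touching, or nested. -/
def P0 (B : Finset (ℕ × ℕ)) : Prop :=
  ∀ p ∈ B, ∀ q ∈ B, p = q ∨ NonTouch p q ∨ Prec p q ∨ Prec q p

/-- The vector `e_I = ∑_{i ∈ I} e_i` of an interval `I = (a,b)` (1-based). -/
def eI (D : ℕ) (p : ℕ × ℕ) : Fin D → ZMod 2 :=
  fun k => if p.1 ≤ k.1 + 1 ∧ k.1 + 1 ≤ p.2 then 1 else 0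

/-- For a set `B` of intervals satisfying (P₀), the family `{e_I : I ∈ B}` is
linearly independent over `𝔽₂`. -/
theorem stmt_8 (D : ℕ) (B : Finset (ℕ × ℕ))
    (hB : ∀ p ∈ B, IsInterval D p) (h0 : P0 B) :
    LinearIndependent (ZMod 2) (fun p : {p // p ∈ B} => eI D p.1) := by
  rw [Fintype.linearIndependent_iff]
  intro g hg
  by_contra hne
  push_neg at hne
  obtain ⟨i0, hi0⟩ := hne
  have hS : (Finset.univ.filter (fun q : {p // p ∈ B} => g q ≠ 0)).Nonempty :=
    ⟨i0, by simp [hi0]⟩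
  obtain ⟨i, hiS, hmax⟩ := Finset.exists_max_image _ (fun q => q.1.2 - q.1.1) hS
  have hgi : g i ≠ 0 := (Finset.mem_filter.mp hiS).2
  obtain ⟨hi1, hi2, hi3⟩ := hB i.1 i.2
  have hD : i.1.1 - 1 < D := by omega
  set k : Fin D := ⟨i.1.1 - 1, hD⟩ with hk
  have hk1 : k.1 + 1 = i.1.1 := by simp [hk]; omega
  have h := congrFun hg k
  simp only [Finset.sum_apply, Pi.smul_apply, Pi.zero_apply, smul_eq_mul] at h
  rw [Finset.sum_eq_single i] at h
  · rw [eI, hk1] at h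
    simp only [le_refl, hi2, and_self, if_true, mul_one] at h
    exact hgi h
  · intro b _ hbi
    by_cases hgb : g b = 0
    · simp [hgb]
    · have hb1 : b.1.1 ≠ i.1.1 ∨ b ∈ Finset.univ.filter (fun q : {p // p ∈ B} => g q ≠ 0) := by
        right; simp [hgb]
      have hbS : b ∈ Finset.univ.filter (fun q : {p // p ∈ B} => g q ≠ 0) := by simp [hgb]
      have hlen := hmax b hbS
      have hne' : b.1 ≠ i.1 := fun h' => hbi (Subtype.ext h')
      obtain ⟨hb1, hb2, hb3⟩ := hB b.1 b.2
      have hcase := h0 b.1 b.2 i.1 i.2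
      have : eI D b.1 k = 0 := by
        rw [eI, hk1]
        rcases hcase with h' | h' | h' | h'
        · exact absurd h' hne'
        · rcases h' with h' | h' <;> · rw [if_neg]; omega
        · rw [if_neg]; obtain ⟨ha, hb⟩ := h'
          -- b ≺ i : contradicts maximality? No: b nested in i means b shorter, fine,
          -- but then b.1.1 > i.1.1 so condition fails
          omega
        · -- i ≺ b : i nested in b, b longer, contradicts maximality
          exfalso; obtain ⟨ha, hb⟩ := h'; omega
      simp [this]
  · intro hni
    exact absurd (Finset.mem_univ i) hni
end

section
/- Let D ≥ 2, i ∈ [1,D], and define u : V → ℤ by writing x ∈ V uniquely as a sum of e_{[a_s,b_s]} over pairwise non-touching intervals and setting u(x) = #{s : a_s even, b_s odd} − #{s : a_s odd, b_s even}; define u' : V' → ℤ analogously for D−2. Then for any x' ∈ V' and c ∈ 𝔽₂, u(T_i(x') + c·e_i) = u'(x'). -/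
/-- `L` is the normal form: a list of intervals of `[1,D]`, pairwise non-touching
and listed in increasing order. -/
def NormalDecomp (D : ℕ) (L : List (ℕ × ℕ)) : Prop :=
  (∀ p ∈ L, 1 ≤ p.1 ∧ p.1 ≤ p.2 ∧ p.2 ≤ D) ∧ L.Chain' (fun p q => p.2 + 2 ≤ q.1)

/-- `u` of a decomposition: (number of intervals `[a,b]` with `a` even, `b` odd)
minus (number with `a` odd, `b` even). -/
def uval (L : List (ℕ × ℕ)) : ℤ :=
  (L.countP (fun p => decide (p.1 % 2 = 0 ∧ p.2 % 2 = 1)) : ℤ) -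
    (L.countP (fun p => decide (p.1 % 2 = 1 ∧ p.2 % 2 = 0)) : ℤ)

namespace Stmt10

def nu (a : ZMod 2) : ℤ := a.val

lemma nu_zero : nu 0 = 0 := rfl

def zext (n : ℕ) (x : Fin n → ZMod 2) (k : ℕ) : ZMod 2 :=
  if h : k - 1 < n ∧ 1 ≤ k then x ⟨k - 1, h.1⟩ else 0

def ext (n : ℕ) (x : Fin n → ZMod 2) (k : ℕ) : ℤ := nu (zext n x k)

def Fval (n : ℕ) (x : Fin n → ZMod 2) : ℤ :=
  ∑ k ∈ Finset.range (n + 1), (-1) ^ k * (ext n x k * ext n x (k + 1))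

lemma zext_add (n : ℕ) (x y : Fin n → ZMod 2) (k : ℕ) :
    zext n (x + y) k = zext n x k + zext n y k := by
  unfold zext; split
  · rfl
  · simp

lemma zext_of_out (n : ℕ) (x : Fin n → ZMod 2) (k : ℕ) (h : k = 0 ∨ n < k) :
    zext n x k = 0 := by
  unfold zext; rw [dif_neg]; omega

lemma zext_in (n : ℕ) (x : Fin n → ZMod 2) (k : ℕ) (h1 : 1 ≤ k) (h2 : k ≤ n) :
    zext n x k = x ⟨k - 1, by omega⟩ := by
  unfold zext; rw [dif_pos ⟨by omega, h1⟩]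

lemma ext_of_out (n : ℕ) (x : Fin n → ZMod 2) (k : ℕ) (h : k = 0 ∨ n < k) :
    ext n x k = 0 := by
  unfold ext; rw [zext_of_out n x k h]; rfl

def wgt (p : ℕ × ℕ) : ℤ :=
  (if p.1 % 2 = 0 ∧ p.2 % 2 = 1 then 1 else 0) -
    (if p.1 % 2 = 1 ∧ p.2 % 2 = 0 then 1 else 0)

lemma uval_eq_sum_wgt (L : List (ℕ × ℕ)) : uval L = (L.map wgt).sum := by
  induction L with
  | nil => rfl
  | cons p rest ih =>
      simp only [List.map_cons, List.sum_cons, ← ih]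
      unfold uval wgt
      simp only [List.countP_cons, decide_eq_true_eq]
      push_cast
      split_ifs <;> omega

-- extension of eI
lemma zext_eI (D : ℕ) (p : ℕ × ℕ) (ha : 1 ≤ p.1) (hb : p.2 ≤ D) (k : ℕ) :
    zext D (eI D p) k = if p.1 ≤ k ∧ k ≤ p.2 then 1 else 0 := by
  by_cases h : 1 ≤ k ∧ k ≤ D
  · rw [zext_in D _ k h.1 h.2]
    unfold eI
    have : k - 1 + 1 = k := by omega
    rw [this]
  · rw [zext_of_out D _ k (by omega), if_neg (by omega)]

lemma ext_eI (D : ℕ) (p : ℕ × ℕ) (ha : 1 ≤ p.1) (hb : p.2 ≤ D) (k : ℕ) :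
    ext D (eI D p) k = if p.1 ≤ k ∧ k ≤ p.2 then 1 else 0 := by
  unfold ext; rw [zext_eI D p ha hb k]; split <;> rfl

lemma sum_eI_lower (D m : ℕ) (L : List (ℕ × ℕ)) (hb : ∀ q ∈ L, m ≤ q.1)
    (k : Fin D) (hk : k.1 + 1 < m) : (L.map (eI D)).sum k = 0 := by
  induction L with
  | nil => rfl
  | cons p rest ih =>
      simp only [List.map_cons, List.sum_cons, Pi.add_apply]
      rw [ih (fun q hq => hb q (List.mem_cons_of_mem _ hq))]
      have hm := hb p List.mem_cons_self
      unfold eI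
      rw [if_neg (by omega)]
      rfl

lemma chain_all (p : ℕ × ℕ) (L : List (ℕ × ℕ)) (hv : ∀ q ∈ L, q.1 ≤ q.2)
    (hc : List.Chain (fun p q => p.2 + 2 ≤ q.1) p L) : ∀ q ∈ L, p.2 + 2 ≤ q.1 := by
  induction L generalizing p with
  | nil => intro q hq; cases hq
  | cons a l ih =>
      rcases List.chain_cons.mp hc with ⟨h1, h2⟩
      intro q hq
      rcases List.mem_cons.mp hq with rfl | hq
      · exact h1
      · have := ih a (fun q hq => hv q (List.mem_cons_of_mem _ hq)) h2 q hq
        have := hv a List.mem_cons_self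
        omega

lemma F_add (D : ℕ) (p : ℕ × ℕ) (ha : 1 ≤ p.1) (hb : p.2 ≤ D) (y : Fin D → ZMod 2)
    (hy : ∀ k : Fin D, k.1 + 1 ≤ p.2 + 1 → y k = 0) :
    Fval D (eI D p + y) = Fval D (eI D p) + Fval D y := by
  have hYz : ∀ k : ℕ, k ≤ p.2 + 1 → zext D y k = 0 := by
    intro k hk
    by_cases h : 1 ≤ k ∧ k ≤ D
    · rw [zext_in D y k h.1 h.2]
      exact hy ⟨k - 1, by omega⟩ (by show k - 1 + 1 ≤ p.2 + 1; omega)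
    · exact zext_of_out D y k (by omega)
  have hEz : ∀ k : ℕ, p.2 + 1 ≤ k → zext D (eI D p) k = 0 := by
    intro k hk
    rw [zext_eI D p ha hb k, if_neg (by omega)]
  have hS : ∀ k : ℕ,
      ext D (eI D p + y) k * ext D (eI D p + y) (k + 1) =
        ext D (eI D p) k * ext D (eI D p) (k + 1) + ext D y k * ext D y (k + 1) := by
    intro k
    unfold ext
    rcases le_or_gt (k + 1) (p.2 + 1) with h | h
    · rw [zext_add, zext_add, hYz k (by omega), hYz (k + 1) h, nu_zero,
        add_zero, add_zero, mul_zero, add_zero]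
    · rw [zext_add, zext_add, hEz k (by omega), hEz (k + 1) (by omega), nu_zero,
        zero_add, zero_add, zero_mul, zero_add]
  unfold Fval
  rw [← Finset.sum_add_distrib]
  apply Finset.sum_congr rfl
  intro k _
  rw [hS k]; ring

lemma sum_neg_one_Ico (a b : ℕ) (h : a ≤ b) :
    ∑ k ∈ Finset.Ico a b, (-1 : ℤ) ^ k =
      (if a % 2 = 0 ∧ b % 2 = 1 then 1 else 0) -
        (if a % 2 = 1 ∧ b % 2 = 0 then 1 else 0) := by
  induction b, h using Nat.le_induction with
  | base =>
      rw [Finset.Ico_self, Finset.sum_empty]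
      split_ifs <;> omega
  | succ b hb ih =>
      rw [Finset.sum_Ico_succ_top hb, ih]
      have : (-1 : ℤ) ^ b = if b % 2 = 0 then 1 else -1 := by
        split_ifs with hp
        · exact Even.neg_one_pow (Nat.even_iff.mpr hp)
        · exact Odd.neg_one_pow (Nat.odd_iff.mpr (by omega))
      rw [this]
      split_ifs <;> omega

lemma F_eI (D : ℕ) (p : ℕ × ℕ) (h1 : 1 ≤ p.1) (h2 : p.1 ≤ p.2) (h3 : p.2 ≤ D) :
    Fval D (eI D p) = wgt p := by
  unfold Fval
  have step : ∀ k ∈ Finset.range (D + 1),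
      (-1 : ℤ) ^ k * (ext D (eI D p) k * ext D (eI D p) (k + 1)) =
        if k ∈ Finset.Ico p.1 p.2 then (-1 : ℤ) ^ k else 0 := by
    intro k _
    rw [ext_eI D p h1 h3, ext_eI D p h1 h3]
    simp only [Finset.mem_Ico]
    split_ifs <;> first | ring1 | (exfalso; omega)
  rw [Finset.sum_congr rfl step, Finset.sum_ite_mem,
    Finset.inter_eq_right.mpr (by intro k hk; simp at hk ⊢; omega),
    sum_neg_one_Ico p.1 p.2 h2]
  rfl

lemma F_sum (D : ℕ) (L : List (ℕ × ℕ)) (hv : ∀ p ∈ L, 1 ≤ p.1 ∧ p.1 ≤ p.2 ∧ p.2 ≤ D)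
    (hc : L.Chain' (fun p q => p.2 + 2 ≤ q.1)) :
    Fval D ((L.map (eI D)).sum) = (L.map wgt).sum := by
  induction L with
  | nil =>
      simp only [List.map_nil, List.sum_nil]
      unfold Fval
      apply Finset.sum_eq_zero
      intro k _
      have h0 : ∀ m, ext D (0 : Fin D → ZMod 2) m = 0 := by
        intro m; unfold ext zext; split <;> rfl
      rw [h0, h0]; ring
  | cons p rest ih =>
      have hvp := hv p List.mem_cons_self
      have hvr : ∀ q ∈ rest, 1 ≤ q.1 ∧ q.1 ≤ q.2 ∧ q.2 ≤ D :=
        fun q hq => hv q (List.mem_cons_of_mem _ hq)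
      have hcr : rest.Chain' (fun p q => p.2 + 2 ≤ q.1) := hc.tail
      have hall : ∀ q ∈ rest, p.2 + 2 ≤ q.1 :=
        chain_all p rest (fun q hq => (hvr q hq).2.1) hc
      simp only [List.map_cons, List.sum_cons]
      rw [F_add D p hvp.1 hvp.2.2 _ (by
        intro k hk
        exact sum_eI_lower D (p.2 + 2) rest hall k (by omega)),
        F_eI D p hvp.1 hvp.2.1 hvp.2.2, ih hvr hcr]

def tau (i k : ℕ) : ℕ := if k + 1 ≤ i then k else if k ≤ i + 1 then i - 1 else k - 2

lemma tcoef_eq (i j k : ℕ) (hj : 1 ≤ j) (hi : 1 ≤ i) :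
    tcoef i j k = if j = tau i k then 1 else 0 := by
  unfold tcoef tau
  split_ifs <;> first | rfl | omega

lemma Tmap_apply (D i : ℕ) (hi : 1 ≤ i) (x' : Fin (D - 2) → ZMod 2) (k : Fin D) :
    Tmap D i x' k = zext (D - 2) x' (tau i (k.1 + 1)) := by
  unfold Tmap
  have h1 : ∀ j : Fin (D - 2), x' j * tcoef i (j.1 + 1) (k.1 + 1)
      = if j.1 + 1 = tau i (k.1 + 1) then x' j else 0 := by
    intro j
    rw [tcoef_eq i (j.1 + 1) (k.1 + 1) (by omega) hi]
    split_ifs <;> simp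
  rw [Finset.sum_congr rfl (fun j _ => h1 j)]
  by_cases hτ : 1 ≤ tau i (k.1 + 1) ∧ tau i (k.1 + 1) ≤ D - 2
  · have hj0 : tau i (k.1 + 1) - 1 < D - 2 := by omega
    have hstep : ∀ j : Fin (D - 2), (if j.1 + 1 = tau i (k.1 + 1) then x' j else 0)
        = if j = (⟨tau i (k.1 + 1) - 1, hj0⟩ : Fin (D - 2)) then x' j else 0 := by
      intro j
      rcases eq_or_ne j (⟨tau i (k.1 + 1) - 1, hj0⟩ : Fin (D - 2)) with h | h
      · subst h
        rw [if_pos rfl, if_pos]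
        show tau i (k.1 + 1) - 1 + 1 = tau i (k.1 + 1)
        omega
      · rw [if_neg h, if_neg]
        intro hc
        apply h
        apply Fin.ext
        show j.1 = tau i (k.1 + 1) - 1
        omega
    rw [Finset.sum_congr rfl (fun j _ => hstep j), Finset.sum_ite_eq' Finset.univ _ x',
      if_pos (Finset.mem_univ _), zext_in _ _ _ hτ.1 hτ.2]
  · rw [zext_of_out _ _ _ (by omega)]
    apply Finset.sum_eq_zero
    intro j _
    rw [if_neg]
    have := j.2
    omega

lemma F_T (D i : ℕ) (hD : 2 ≤ D) (hi : 1 ≤ i) (hiD : i ≤ D)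
    (x' : Fin (D - 2) → ZMod 2) (c : ZMod 2) :
    Fval D (Tmap D i x' + c • basisVec D i) = Fval (D - 2) x' := by
  set y := Tmap D i x' + c • basisVec D i with hy
  have hyv : ∀ κ, 1 ≤ κ → κ ≤ D →
      zext D y κ = zext (D - 2) x' (tau i κ) + (if κ = i then c else 0) := by
    intro κ hκ1 hκ2
    rw [zext_in D y κ hκ1 hκ2, hy]
    have hval : ((⟨κ - 1, by omega⟩ : Fin D) : ℕ) + 1 = κ := by
      show κ - 1 + 1 = κ; omega
    rw [Pi.add_apply, Pi.smul_apply, Tmap_apply D i hi x', hval]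
    unfold basisVec
    rw [hval, smul_eq_mul, mul_ite, mul_one, mul_zero]
  have H1 : ∀ κ, κ ≤ i - 1 → ext D y κ = ext (D - 2) x' κ := by
    intro κ hκ
    rcases Nat.eq_zero_or_pos κ with rfl | hκ1
    · rw [ext_of_out _ _ _ (Or.inl rfl), ext_of_out _ _ _ (Or.inl rfl)]
    · unfold ext
      rw [hyv κ hκ1 (by omega), if_neg (by omega), add_zero]
      have : tau i κ = κ := by unfold tau; rw [if_pos (by omega)]
      rw [this]
  have H2 : ext D y i = nu (zext (D - 2) x' (i - 1) + c) := by
    unfold ext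
    rw [hyv i hi hiD, if_pos rfl]
    have : tau i i = i - 1 := by
      unfold tau; rw [if_neg (by omega), if_pos (by omega)]
    rw [this]
  have H34 : ∀ κ, i + 1 ≤ κ → ext D y κ = ext (D - 2) x' (κ - 2) := by
    intro κ hκ
    rcases le_or_gt κ D with hκ2 | hκ2
    · unfold ext
      rw [hyv κ (by omega) hκ2, if_neg (by omega), add_zero]
      have : tau i κ = κ - 2 := by unfold tau; split_ifs <;> omega
      rw [this]
    · rw [ext_of_out _ _ _ (Or.inr hκ2), ext_of_out _ _ _ (Or.inr (by omega))]
  unfold Fval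
  set g : ℕ → ℤ := ext (D - 2) x' with hg
  set h : ℕ → ℤ := ext D y with hh
  have hD2 : D - 2 + 1 = D - 1 := by omega
  rw [hD2, Finset.range_eq_Ico, Finset.range_eq_Ico,
    ← Finset.sum_Ico_consecutive (fun k => (-1 : ℤ) ^ k * (h k * h (k + 1)))
      (Nat.zero_le (i - 1)) (by omega : i - 1 ≤ D + 1),
    ← Finset.sum_Ico_consecutive (fun k => (-1 : ℤ) ^ k * (h k * h (k + 1)))
      (by omega : i - 1 ≤ i + 1) (by omega : i + 1 ≤ D + 1),
    ← Finset.sum_Ico_consecutive (fun k => (-1 : ℤ) ^ k * (g k * g (k + 1)))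
      (Nat.zero_le (i - 1)) (by omega : i - 1 ≤ D - 1)]
  have e1 : ∑ k ∈ Finset.Ico 0 (i - 1), (-1 : ℤ) ^ k * (h k * h (k + 1))
      = ∑ k ∈ Finset.Ico 0 (i - 1), (-1 : ℤ) ^ k * (g k * g (k + 1)) := by
    apply Finset.sum_congr rfl
    intro k hk
    rw [Finset.mem_Ico] at hk
    rw [H1 k (by omega), H1 (k + 1) (by omega)]
  have e2 : ∑ k ∈ Finset.Ico (i - 1) (i + 1), (-1 : ℤ) ^ k * (h k * h (k + 1)) = 0 := by
    obtain ⟨m, rfl⟩ : ∃ m, i = m + 1 := ⟨i - 1, by omega⟩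
    have hm : m + 1 - 1 = m := by omega
    rw [hm]
    rw [show m + 1 + 1 = m + 1 + 1 from rfl, Finset.sum_Ico_succ_top (by omega : m ≤ m + 1),
      Finset.sum_Ico_succ_top (by omega : m ≤ m), Finset.Ico_self, Finset.sum_empty, zero_add]
    have hA : h m = nu (zext (D - 2) x' m) := by rw [H1 m (by omega)]; rfl
    have hB : h (m + 1) = nu (zext (D - 2) x' m + c) := by
      rw [H2, hm]
    have hC : h (m + 1 + 1) = nu (zext (D - 2) x' m) := by
      rw [H34 (m + 1 + 1) (by omega)]
      have : m + 1 + 1 - 2 = m := by omega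
      rw [this]; rfl
    rw [hA, hB, hC, pow_succ]
    ring
  have e3 : ∑ k ∈ Finset.Ico (i + 1) (D + 1), (-1 : ℤ) ^ k * (h k * h (k + 1))
      = ∑ k ∈ Finset.Ico (i - 1) (D - 1), (-1 : ℤ) ^ k * (g k * g (k + 1)) := by
    rw [Finset.sum_Ico_eq_sum_range, Finset.sum_Ico_eq_sum_range,
      (by omega : D + 1 - (i + 1) = D - i), (by omega : D - 1 - (i - 1) = D - i)]
    apply Finset.sum_congr rfl
    intro k _
    have hA : h (i + 1 + k) = g (i - 1 + k) := by
      rw [H34 (i + 1 + k) (by omega)]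
      congr 1
      omega
    have hB : h (i + 1 + k + 1) = g (i - 1 + k + 1) := by
      rw [H34 (i + 1 + k + 1) (by omega)]
      congr 1
      omega
    have hs : (-1 : ℤ) ^ (i + 1 + k) = (-1 : ℤ) ^ (i - 1 + k) := by
      rw [(by omega : i + 1 + k = (i - 1 + k) + 2), pow_add]
      norm_num
    rw [hA, hB, hs]
  rw [e1, e2, e3]
  ring

end Stmt10

/-- For any `x' ∈ V'` and `c ∈ 𝔽₂`, `u(T_i(x') + c·e_i) = u'(x')`. -/
theorem stmt_10 (D i : ℕ) (hD : 2 ≤ D) (hi : 1 ≤ i) (hiD : i ≤ D)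
    (x' : Fin (D - 2) → ZMod 2) (c : ZMod 2) (L L' : List (ℕ × ℕ))
    (hL : NormalDecomp D L) (hLsum : (L.map (eI D)).sum = Tmap D i x' + c • basisVec D i)
    (hL' : NormalDecomp (D - 2) L') (hL'sum : (L'.map (eI (D - 2))).sum = x') :
    uval L = uval L' := by
  rw [Stmt10.uval_eq_sum_wgt L, Stmt10.uval_eq_sum_wgt L',
    ← Stmt10.F_sum D L hL.1 hL.2, ← Stmt10.F_sum (D - 2) L' hL'.1 hL'.2, hLsum, hL'sum]
  exact Stmt10.F_T D i hD hi hiD x' c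
end

section
/- Let B ∈ S_D be an element satisfying (P₀) and (P₁), and let I = [a,b] ∈ B with |I| odd (so b−a even). Then the number of intervals I' ∈ B of odd length with I' ⊆ I equals (b−a+2)/2. -/
/-- Property (P₁): for every odd-length `[a,b] ∈ B` with `b - a ≥ 2`, every
`z ∈ {a+1, a+3, …, b-1}` lies in some odd-length member of `B` contained in
`[a+1, b-1]`. -/
def P1 (B : Finset (ℕ × ℕ)) : Prop :=
  ∀ p ∈ B, (p.2 - p.1) % 2 = 0 → p.1 + 2 ≤ p.2 →
    ∀ z : ℕ, p.1 + 1 ≤ z → z ≤ p.2 - 1 → z % 2 = (p.1 + 1) % 2 →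
      ∃ q ∈ B, (q.2 - q.1) % 2 = 0 ∧ p.1 + 1 ≤ q.1 ∧ q.2 ≤ p.2 - 1 ∧
        q.1 ≤ z ∧ z ≤ q.2

lemma helper_parity (c d : ℕ) (hcd : c ≤ d) (he : (d - c) % 2 = 0) :
    ((Finset.Icc c d).filter (fun z => z % 2 = c % 2)).card = (d - c) / 2 + 1 := by
  have h : (Finset.Icc c d).filter (fun z => z % 2 = c % 2)
      = (Finset.range ((d - c) / 2 + 1)).image (fun k => c + 2 * k) := by
    ext z
    simp only [Finset.mem_filter, Finset.mem_Icc, Finset.mem_image, Finset.mem_range]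
    constructor
    · rintro ⟨⟨h1, h2⟩, h3⟩
      exact ⟨(z - c) / 2, by omega, by omega⟩
    · rintro ⟨k, hk, rfl⟩
      omega
  rw [h, Finset.card_image_of_injective _ (fun x y h => by omega), Finset.card_range]

lemma key (B : Finset (ℕ × ℕ))
    (hB : ∀ p ∈ B, 1 ≤ p.1 ∧ p.1 ≤ p.2)
    (h0 : P0 B) (h1 : P1 B) :
    ∀ n a b, b - a = n → (a, b) ∈ B → (b - a) % 2 = 0 →
    (B.filter (fun p => (p.2 - p.1) % 2 = 0 ∧ a ≤ p.1 ∧ p.2 ≤ b)).card =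
      (b - a + 2) / 2 := by
  classical
  intro n
  induction n using Nat.strong_induction_on with
  | _ n IH =>
  intro a b hn hab hodd
  have hab' := hB _ hab
  simp only at hab'
  rcases Nat.eq_zero_or_pos n with hn0 | hnpos
  · -- base case b = a
    have hba : b = a := by omega
    subst hba
    have hsingle : B.filter (fun p => (p.2 - p.1) % 2 = 0 ∧ b ≤ p.1 ∧ p.2 ≤ b) = {(b, b)} := by
      apply Finset.eq_singleton_iff_unique_mem.mpr
      constructor
      · simp only [Finset.mem_filter]
        exact ⟨hab, by omega, le_refl _, le_refl _⟩
      · intro p hp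
        simp only [Finset.mem_filter] at hp
        have := hB p hp.1
        have h1 : p.1 = b := by omega
        have h2 : p.2 = b := by omega
        exact Prod.ext h1 h2
    rw [hsingle]
    simp
  · -- inductive case
    have hb2 : a + 2 ≤ b := by omega
    set S := B.filter (fun q => (q.2 - q.1) % 2 = 0 ∧ a + 1 ≤ q.1 ∧ q.2 ≤ b - 1) with hS
    have hS_mem : ∀ q ∈ S, q ∈ B ∧ (q.2 - q.1) % 2 = 0 ∧ a + 1 ≤ q.1 ∧ q.2 ≤ b - 1 := by
      intro q hq
      simpa [hS, Finset.mem_filter, and_assoc] using hq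
    have hTS : B.filter (fun p => (p.2 - p.1) % 2 = 0 ∧ a ≤ p.1 ∧ p.2 ≤ b)
        = insert (a, b) S := by
      ext p
      simp only [Finset.mem_filter, Finset.mem_insert, hS]
      constructor
      · rintro ⟨hpB, hpo, hpa, hpb⟩
        by_cases hpe : p = (a, b)
        · exact Or.inl hpe
        · have hple := (hB p hpB).2
          rcases h0 p hpB (a, b) hab with h | h | h | h
          · exact absurd h hpe
          · simp only [NonTouch] at h; omega
          · simp only [Prec] at h
            exact Or.inr ⟨hpB, hpo, by omega, by omega⟩
          · simp only [Prec] at h; omega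
      · rintro (rfl | ⟨hpB, hpo, hp1, hp2⟩)
        · exact ⟨hab, hodd, le_refl _, le_refl _⟩
        · exact ⟨hpB, hpo, by omega, by omega⟩
    have habS : (a, b) ∉ S := by
      simp only [hS, Finset.mem_filter]
      rintro ⟨-, -, h, -⟩
      omega
    rw [hTS, Finset.card_insert_of_notMem habS]
    -- maximal elements
    set Mx := S.filter (fun q => ∀ r ∈ S, ¬ Prec q r) with hMx
    have hMx_mem : ∀ M ∈ Mx, M ∈ S ∧ ∀ r ∈ S, ¬ Prec M r := by
      intro M hM
      simpa [hMx, Finset.mem_filter] using hM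
    -- (B) maximal container
    have hmaxcont : ∀ p ∈ S, ∃ M ∈ Mx, M.1 ≤ p.1 ∧ p.2 ≤ M.2 := by
      intro p hp
      have hpU : p ∈ S.filter (fun q => q.1 ≤ p.1 ∧ p.2 ≤ q.2) := by
        simp [Finset.mem_filter, hp]
      obtain ⟨M, hMU, hMmax⟩ :=
        (S.filter (fun q => q.1 ≤ p.1 ∧ p.2 ≤ q.2)).exists_max_image
          (fun q => q.2 - q.1) ⟨p, hpU⟩
      simp only [Finset.mem_filter] at hMU
      obtain ⟨hMS, hMc1, hMc2⟩ := hMU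
      refine ⟨M, ?_, hMc1, hMc2⟩
      simp only [hMx, Finset.mem_filter]
      refine ⟨hMS, fun r hr hMr => ?_⟩
      have hrU : r ∈ S.filter (fun q => q.1 ≤ p.1 ∧ p.2 ≤ q.2) := by
        simp only [Finset.mem_filter]
        simp only [Prec] at hMr
        exact ⟨hr, by omega, by omega⟩
      have hle := hMmax r hrU
      have hM12 := (hB M (hS_mem M hMS).1).2
      simp only [Prec] at hMr
      omega
    -- (C) distinct maximals non-touch
    have hnt : ∀ M ∈ Mx, ∀ M' ∈ Mx, M ≠ M' → M.2 + 2 ≤ M'.1 ∨ M'.2 + 2 ≤ M.1 := by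
      intro M hM M' hM' hne
      obtain ⟨hMS, hMmax⟩ := hMx_mem M hM
      obtain ⟨hM'S, hM'max⟩ := hMx_mem M' hM'
      rcases h0 M (hS_mem M hMS).1 M' (hS_mem M' hM'S).1 with h | h | h | h
      · exact absurd h hne
      · simp only [NonTouch] at h; omega
      · exact absurd h (hMmax M' hM'S)
      · exact absurd h (hM'max M hMS)
    -- cover of odd positions
    have hcover : ∀ z, a + 1 ≤ z → z ≤ b - 1 → z % 2 = (a + 1) % 2 →
        ∃ M ∈ Mx, M.1 ≤ z ∧ z ≤ M.2 := by
      intro z hz1 hz2 hz3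
      obtain ⟨q, hqB, hqo, hq1, hq2, hqz1, hqz2⟩ := h1 (a, b) hab hodd hb2 z hz1 hz2 hz3
      have hqS : q ∈ S := by
        simp only [hS, Finset.mem_filter]
        exact ⟨hqB, hqo, hq1, hq2⟩
      obtain ⟨M, hM, hM1, hM2⟩ := hmaxcont q hqS
      exact ⟨M, hM, by omega, by omega⟩
    -- (D) parity of left endpoints of maximals
    have hpar : ∀ M ∈ Mx, M.1 % 2 = (a + 1) % 2 := by
      intro M hM
      by_contra hc
      obtain ⟨hMS, -⟩ := hMx_mem M hM
      obtain ⟨hMB, hMo, hMa, hMb⟩ := hS_mem M hMS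
      have hM12 := (hB M hMB).2
      obtain ⟨M', hM', h1', h2'⟩ := hcover (M.1 - 1) (by omega) (by omega) (by omega)
      by_cases he : M = M'
      · subst he; omega
      · have := hnt M hM M' hM' he
        have hM'S := (hMx_mem M' hM').1
        have := (hS_mem M' hM'S).2.2.1
        omega
    -- S as disjoint union over maximals
    have hdisj : (Mx : Set (ℕ × ℕ)).PairwiseDisjoint
        (fun M => B.filter (fun p => (p.2 - p.1) % 2 = 0 ∧ M.1 ≤ p.1 ∧ p.2 ≤ M.2)) := by
      intro M hM M' hM' hne
      apply Finset.disjoint_left.mpr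
      intro p hp hp'
      simp only [Finset.mem_filter] at hp hp'
      have hple := (hB p hp.1).2
      have := hnt M (by simpa using hM) M' (by simpa using hM') hne
      omega
    have hSunion : S = Mx.biUnion
        (fun M => B.filter (fun p => (p.2 - p.1) % 2 = 0 ∧ M.1 ≤ p.1 ∧ p.2 ≤ M.2)) := by
      ext p
      simp only [Finset.mem_biUnion, Finset.mem_filter]
      constructor
      · intro hp
        obtain ⟨M, hM, h1', h2'⟩ := hmaxcont p hp
        have hpd := hS_mem p hp
        exact ⟨M, hM, hpd.1, hpd.2.1, h1', h2'⟩
      · rintro ⟨M, hM, hpB, hpo, h1', h2'⟩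
        have hMd := hS_mem M (hMx_mem M hM).1
        simp only [hS, Finset.mem_filter]
        exact ⟨hpB, hpo, by omega, by omega⟩
    have hScard : S.card = (b - a) / 2 := by
      rw [hSunion, Finset.card_biUnion (fun M hM M' hM' hne => hdisj (by simpa using hM) (by simpa using hM') hne)]
      have hIH : ∀ M ∈ Mx,
          (B.filter (fun p => (p.2 - p.1) % 2 = 0 ∧ M.1 ≤ p.1 ∧ p.2 ≤ M.2)).card
            = (M.2 - M.1 + 2) / 2 := by
        intro M hM
        obtain ⟨hMB, hMo, hMa, hMb⟩ := hS_mem M (hMx_mem M hM).1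
        have hM12 := (hB M hMB).2
        have : (M.1, M.2) ∈ B := by rwa [Prod.mk.eta]
        exact IH (M.2 - M.1) (by omega) M.1 M.2 rfl this hMo
      rw [Finset.sum_congr rfl hIH]
      have h1z : ∀ M ∈ Mx, (M.2 - M.1 + 2) / 2
          = ((Finset.Icc M.1 M.2).filter (fun z => z % 2 = (a + 1) % 2)).card := by
        intro M hM
        obtain ⟨hMB, hMo, hMa, hMb⟩ := hS_mem M (hMx_mem M hM).1
        have hM12 := (hB M hMB).2
        have hp := hpar M hM
        have : (Finset.Icc M.1 M.2).filter (fun z => z % 2 = (a + 1) % 2)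
            = (Finset.Icc M.1 M.2).filter (fun z => z % 2 = M.1 % 2) := by
          apply Finset.filter_congr
          intro z _
          constructor <;> intro h <;> omega
        rw [this, helper_parity M.1 M.2 hM12 hMo]
        omega
      rw [Finset.sum_congr rfl h1z]
      have hdisjZ : ∀ M ∈ Mx, ∀ M' ∈ Mx, M ≠ M' →
          Disjoint ((Finset.Icc M.1 M.2).filter (fun z => z % 2 = (a + 1) % 2))
            ((Finset.Icc M'.1 M'.2).filter (fun z => z % 2 = (a + 1) % 2)) := by
        intro M hM M' hM' hne
        apply Finset.disjoint_left.mpr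
        intro z hz hz'
        simp only [Finset.mem_filter, Finset.mem_Icc] at hz hz'
        have := hnt M hM M' hM' hne
        omega
      rw [← Finset.card_biUnion hdisjZ]
      have hZeq : Mx.biUnion (fun M => (Finset.Icc M.1 M.2).filter (fun z => z % 2 = (a + 1) % 2))
          = (Finset.Icc (a + 1) (b - 1)).filter (fun z => z % 2 = (a + 1) % 2) := by
        ext z
        simp only [Finset.mem_biUnion, Finset.mem_filter, Finset.mem_Icc]
        constructor
        · rintro ⟨M, hM, ⟨hz1, hz2⟩, hzp⟩
          obtain ⟨-, -, hMa, hMb⟩ := hS_mem M (hMx_mem M hM).1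
          exact ⟨⟨by omega, by omega⟩, hzp⟩
        · rintro ⟨⟨hz1, hz2⟩, hzp⟩
          obtain ⟨M, hM, h1', h2'⟩ := hcover z hz1 hz2 hzp
          exact ⟨M, hM, ⟨h1', h2'⟩, hzp⟩
      rw [hZeq]
      have : (Finset.Icc (a + 1) (b - 1)).filter (fun z => z % 2 = (a + 1) % 2)
          = (Finset.Icc (a + 1) (b - 1)).filter (fun z => z % 2 = (a + 1) % 2) := rfl
      rw [helper_parity (a + 1) (b - 1) (by omega) (by omega)]
      omega
    omega

/-- If `B` satisfies (P₀) and (P₁) and `I = [a,b] ∈ B` has odd length, then the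
number of odd-length members of `B` contained in `I` equals `(b-a+2)/2`. -/
theorem stmt_15 (D : ℕ) (B : Finset (ℕ × ℕ))
    (hB : ∀ p ∈ B, 1 ≤ p.1 ∧ p.1 ≤ p.2 ∧ p.2 ≤ D)
    (h0 : P0 B) (h1 : P1 B) (a b : ℕ) (hab : (a, b) ∈ B) (hodd : (b - a) % 2 = 0) :
    (B.filter (fun p => (p.2 - p.1) % 2 = 0 ∧ a ≤ p.1 ∧ p.2 ≤ b)).card =
      (b - a + 2) / 2 := by
  exact key B (fun p hp => ⟨(hB p hp).1, (hB p hp).2.1⟩) h0 h1 (b - a) a b rfl hab hodd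
end

section
/- Let B ∈ S_D (satisfying (P₀),(P₁),(P₂)). If I ∈ B has odd length and J ∈ B has even length, then J is not contained in I. -/
/-- Property (P₂): there is a sequence `0 = h₀ < h₁ < ⋯ < h_{2k} < h_{2k+1} = D+1`
with `h_j ≡ j (mod 2)` whose middle terms give exactly the even-length members
`[h_j, h_{2k+1-j}]`, `1 ≤ j ≤ k`, of `B`, together with the filling condition on
odd-length members in the gaps. -/
def P2 (D : ℕ) (B : Finset (ℕ × ℕ)) : Prop :=
  ∃ (k : ℕ) (h : ℕ → ℕ),
    h 0 = 0 ∧ h (2 * k + 1) = D + 1 ∧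
    (∀ j, j ≤ 2 * k → h j < h (j + 1)) ∧
    (∀ j, j ≤ 2 * k + 1 → h j % 2 = j % 2) ∧
    (∀ p : ℕ × ℕ, (p ∈ B ∧ (p.2 - p.1) % 2 = 1) ↔
      ∃ j, 1 ≤ j ∧ j ≤ k ∧ p = (h j, h (2 * k + 1 - j))) ∧
    (∀ j, j ≤ 2 * k → j ≠ k → h j + 3 ≤ h (j + 1) →
      (j < k →
        ∀ z : ℕ, h j + 1 ≤ z → z ≤ h (j + 1) - 2 → z % 2 = (h j + 1) % 2 →
          ∃ q ∈ B, (q.2 - q.1) % 2 = 0 ∧ h j + 1 ≤ q.1 ∧ q.2 ≤ h (j + 1) - 2 ∧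
            q.1 ≤ z ∧ z ≤ q.2) ∧
      (k < j →
        ∀ z : ℕ, h j + 2 ≤ z → z ≤ h (j + 1) - 1 → z % 2 = (h j + 2) % 2 →
          ∃ q ∈ B, (q.2 - q.1) % 2 = 0 ∧ h j + 2 ≤ q.1 ∧ q.2 ≤ h (j + 1) - 1 ∧
            q.1 ≤ z ∧ z ≤ q.2))


lemma aux_no_even_in_odd (B : Finset (ℕ × ℕ)) (h0 : P0 B) (h1 : P1 B) :
    ∀ n : ℕ, ∀ I ∈ B, ∀ J ∈ B, I.2 - I.1 ≤ n →
      (I.2 - I.1) % 2 = 0 → (J.2 - J.1) % 2 = 1 →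
      ¬ (I.1 < J.1 ∧ J.2 < I.2) := by
  intro n
  induction n using Nat.strong_induction_on with
  | _ n ih =>
    rintro I hI J hJ hn hIo hJe ⟨hl, hr⟩
    have hJlt : J.1 < J.2 := by omega
    have hII : I.1 + 2 ≤ I.2 := by omega
    set z : ℕ := if J.1 % 2 = (I.1 + 1) % 2 then J.1 else J.2 with hzdef
    have hzJ : J.1 ≤ z ∧ z ≤ J.2 ∧ (z = J.1 ∨ z = J.2) := by
      rw [hzdef]; split <;> omega
    have hz1 : I.1 + 1 ≤ z := by omega
    have hz2 : z ≤ I.2 - 1 := by omega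
    have hzp : z % 2 = (I.1 + 1) % 2 := by
      rw [hzdef]; split
      · assumption
      · omega
    obtain ⟨q, hq, hqo, hq1, hq2, hqz1, hqz2⟩ := h1 I hI hIo hII z hz1 hz2 hzp
    have hne : q ≠ J := by
      intro h; rw [h] at hqo; omega
    rcases h0 q hq J hJ with h | h | h | h
    · exact hne h
    · rcases h with h | h <;> omega
    · -- Prec q J : J.1 < q.1 ∧ q.2 < J.2, impossible since z is an endpoint of J
      obtain ⟨ha, hb⟩ := h
      rw [hzdef] at hqz1 hqz2
      revert hqz1 hqz2; split <;> omega
    · -- Prec J q : q.1 < J.1 ∧ J.2 < q.2, recurse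
      obtain ⟨ha, hb⟩ := h
      exact ih (q.2 - q.1) (by omega) q hq J hJ le_rfl hqo hJe ⟨ha, hb⟩

/-- For `B ∈ S_D` (satisfying (P₀),(P₁),(P₂)), no even-length member `J` of `B`
is contained in an odd-length member `I`. -/
theorem stmt_16 (D : ℕ) (hD : Even D) (B : Finset (ℕ × ℕ))
    (hB : ∀ p ∈ B, 1 ≤ p.1 ∧ p.1 ≤ p.2 ∧ p.2 ≤ D)
    (h0 : P0 B) (h1 : P1 B) (h2 : P2 D B)
    (I J : ℕ × ℕ) (hI : I ∈ B) (hJ : J ∈ B)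
    (hIodd : (I.2 - I.1) % 2 = 0) (hJeven : (J.2 - J.1) % 2 = 1) :
    ¬ (I.1 ≤ J.1 ∧ J.2 ≤ I.2) := by
  rintro ⟨hl, hr⟩
  have hJlt : J.1 < J.2 := by omega
  have hne : I ≠ J := by
    intro h; rw [h] at hIodd; omega
  rcases h0 I hI J hJ with h | h | h | h
  · exact hne h
  · rcases h with h | h <;> omega
  · exact absurd h.1 (by omega)
  · exact aux_no_even_in_odd B h0 h1 (I.2 - I.1) I hI J hJ le_rfl hIodd hJeven h
end
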